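/- Let G be a finite group, p a prime, and P ≤ G an abelian radical p-subgroup. Then N_G(P) = N_G(C_G(P)). -/

import Mathlib

/-- The subgroup of `G` generated by all subgroups of `N` that are `p`-groups and
are normalized by `N`, i.e. `O_p(N)`, the largest normal `p`-subgroup of `N`. -/
def relPCore (p : ℕ) {G : Type*} [Group G] (N : Subgroup G) : Subgroup G :=
  sSup {Q : Subgroup G | Q ≤ N ∧ IsPGroup p Q ∧ ∀ n ∈ N, ∀ x ∈ Q, n * x * n⁻¹ ∈ Q}

/-- The "p-part of the center" of a subgroup `C` : elements of `C` that centralize `C`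
and have `p`-power order. -/
def pCenterPart (p : ℕ) {G : Type*} [Group G] (C : Subgroup G) : Subgroup G where
  carrier := {g | g ∈ C ∧ (∀ c ∈ C, c * g = g * c) ∧ ∃ k, g ^ p ^ k = 1}
  one_mem' := ⟨C.one_mem, by simp, 0, by simp⟩
  mul_mem' := by
    rintro a b ⟨haC, haZ, k, hk⟩ ⟨hbC, hbZ, l, hl⟩
    refine ⟨C.mul_mem haC hbC, fun c hc => by rw [← mul_assoc, haZ c hc,
      mul_assoc, hbZ c hc, mul_assoc], k + l, ?_⟩
    have hcomm : Commute a b := (haZ b hbC).symm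
    rw [hcomm.mul_pow, pow_add, pow_mul, hk, one_pow, one_mul, pow_mul', hl, one_pow]
  inv_mem' := by
    rintro a ⟨haC, haZ, k, hk⟩
    exact ⟨C.inv_mem haC, fun c hc => Commute.inv_right (haZ c hc),
      k, by rw [inv_pow, hk, inv_one]⟩

theorem mem_pCenterPart {p : ℕ} {G : Type*} [Group G] {C : Subgroup G} {g : G} :
    g ∈ pCenterPart p C ↔ g ∈ C ∧ (∀ c ∈ C, c * g = g * c) ∧ ∃ k, g ^ p ^ k = 1 :=
  Iff.rfl

/-- If conjugation by `n` (and `n⁻¹`) preserves `C`, it preserves `pCenterPart p C`. -/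
theorem conj_mem_pCenterPart {p : ℕ} {G : Type*} [Group G] {C : Subgroup G} {n : G}
    (h1 : ∀ g ∈ C, n * g * n⁻¹ ∈ C) (h2 : ∀ g ∈ C, n⁻¹ * g * n ∈ C)
    {x : G} (hx : x ∈ pCenterPart p C) : n * x * n⁻¹ ∈ pCenterPart p C := by
  obtain ⟨hxC, hxZ, k, hk⟩ := hx
  refine ⟨h1 x hxC, fun c hc => ?_, k, ?_⟩
  · have hc' : n⁻¹ * c * n ∈ C := h2 c hc
    have := hxZ _ hc'
    -- (n⁻¹ * c * n) * x = x * (n⁻¹ * c * n)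
    have goal : c * (n * x * n⁻¹) = n * ((n⁻¹ * c * n) * x) * n⁻¹ := by group
    rw [goal, this]; group
  · have : (n * x * n⁻¹) ^ p ^ k = n * x ^ p ^ k * n⁻¹ := by
      rw [conj_pow]
    rw [this, hk, mul_one, mul_inv_cancel]

/-- If `P` is an abelian radical `p`-subgroup of a finite group `G`,
then `N_G(P) = N_G(C_G(P))`. -/
theorem stmt2 {G : Type*} [Group G] [Finite G] (p : ℕ) (hp : p.Prime)
    (P : Subgroup G) (hP : IsPGroup p P)
    (hab : ∀ x ∈ P, ∀ y ∈ P, x * y = y * x)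
    (hrad : relPCore p (Subgroup.normalizer (P : Set G)) = P) :
    Subgroup.normalizer (P : Set G) = Subgroup.normalizer ((Subgroup.centralizer (P : Set G) : Subgroup G) : Set G) := by
  set C := Subgroup.centralizer (P : Set G) with hC
  set T := pCenterPart p C with hT
  -- P ≤ C
  have hPC : P ≤ C := fun x hx => Subgroup.mem_centralizer_iff.mpr fun h hh => hab h hh x hx
  -- elements of C conjugate elements of P to themselves
  have hfix : ∀ c ∈ C, ∀ h ∈ P, c * h * c⁻¹ = h := by
    intro c hc h hh
    have : h * c = c * h := Subgroup.mem_centralizer_iff.mp hc h hh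
    rw [← this, mul_inv_cancel_right]
  -- C ≤ N_G(P)
  have hCN : C ≤ (Subgroup.normalizer (P : Set G)) := by
    intro c hc
    rw [Subgroup.mem_normalizer_iff]
    intro h
    constructor
    · intro hh; rw [hfix c hc h hh]; exact hh
    · intro hh
      have := hfix c⁻¹ (C.inv_mem hc) _ hh
      rw [inv_inv] at this
      have : h = c * h * c⁻¹ := by rw [← this]; group
      rw [this]; exact hh
  -- N_G(P) conjugates C into itself
  have conjC : ∀ n ∈ (Subgroup.normalizer (P : Set G)), ∀ g ∈ C, n * g * n⁻¹ ∈ C := by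
    intro n hn g hg
    rw [Subgroup.mem_centralizer_iff]
    intro h hh
    have hh' : n⁻¹ * h * n ∈ P := by
      have := (Subgroup.mem_normalizer_iff.mp ((Subgroup.normalizer (P : Set G)).inv_mem hn) h).mp hh
      rwa [inv_inv] at this
    have := Subgroup.mem_centralizer_iff.mp hg _ hh'
    have goal : h * (n * g * n⁻¹) = n * ((n⁻¹ * h * n) * g) * n⁻¹ := by group
    rw [goal, this]; group
  -- N_G(P) conjugates T into itself
  have conjT : ∀ n ∈ (Subgroup.normalizer (P : Set G)), ∀ x ∈ T, n * x * n⁻¹ ∈ T := by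
    intro n hn x hx
    refine conj_mem_pCenterPart (conjC n hn) ?_ hx
    intro g hg
    have := conjC n⁻¹ ((Subgroup.normalizer (P : Set G)).inv_mem hn) g hg
    rwa [inv_inv] at this
  -- T is a p-group
  have hTp : IsPGroup p T := by
    rintro ⟨g, hgC, hgZ, k, hk⟩
    exact ⟨k, by ext; push_cast; exact hk⟩
  -- T ≤ N_G(P)
  have hTN : T ≤ (Subgroup.normalizer (P : Set G)) := fun x hx => hCN hx.1
  -- T ≤ P by radicality
  have hTP : T ≤ P := by
    rw [← hrad]
    exact le_sSup ⟨hTN, hTp, conjT⟩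
  -- P ≤ T
  have hPT : P ≤ T := by
    intro x hx
    refine ⟨hPC hx, fun c hc => (Subgroup.mem_centralizer_iff.mp hc x hx).symm, ?_⟩
    obtain ⟨k, hk⟩ := hP ⟨x, hx⟩
    exact ⟨k, by simpa [← Subtype.ext_iff] using hk⟩
  have hTPeq : T = P := le_antisymm hTP hPT
  -- N_G(C) conjugates T into itself
  have conjT' : ∀ n ∈ (Subgroup.normalizer (C : Set G)), ∀ x ∈ T, n * x * n⁻¹ ∈ T := by
    intro n hn x hx
    refine conj_mem_pCenterPart (fun g hg => ?_) (fun g hg => ?_) hx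
    · exact (Subgroup.mem_normalizer_iff.mp hn g).mp hg
    · have := (Subgroup.mem_normalizer_iff.mp ((Subgroup.normalizer (C : Set G)).inv_mem hn) g).mp hg
      rwa [inv_inv] at this
  -- conclude
  apply le_antisymm
  · -- N_G(P) ≤ N_G(C)
    intro n hn
    rw [Subgroup.mem_normalizer_iff]
    intro g
    constructor
    · exact conjC n hn g
    · intro hg
      have := conjC n⁻¹ ((Subgroup.normalizer (P : Set G)).inv_mem hn) _ hg
      rw [inv_inv] at this
      have h2 : n⁻¹ * (n * g * n⁻¹) * n = g := by group
      rwa [h2] at this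
  · -- N_G(C) ≤ N_G(P)
    intro n hn
    rw [Subgroup.mem_normalizer_iff]
    intro g
    constructor
    · intro hg
      exact hTP (conjT' n hn g (hTPeq ▸ hPT hg))
    · intro hg
      have := conjT' n⁻¹ ((Subgroup.normalizer (C : Set G)).inv_mem hn) _ (hPT hg)
      rw [inv_inv] at this
      have h2 : n⁻¹ * (n * g * n⁻¹) * n = g := by group
      rw [h2] at this
      exact hTP this
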